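/- Let 𝒫 be a set of prime numbers and let C = ℤ[𝒫⁻¹] be the subring of ℚ generated by {1/p : p ∈ 𝒫}, regarded as an additive abelian group. Then for every integer N ≥ 1, the subgroup N·C = {N·c : c ∈ C} has finite index in C, and this index equals the largest positive divisor of N having no prime divisor in 𝒫. -/

import Mathlib

noncomputable def PRing (P : Set ℕ) : Subring ℚ :=
  Subring.closure {x : ℚ | ∃ p ∈ P, x = (p : ℚ)⁻¹}

/-- The subring of rationals whose denominator has all prime factors in `P`. -/
def denRing (P : Set ℕ) : Subring ℚ where
  carrier := {q : ℚ | ∀ p : ℕ, p.Prime → p ∣ q.den → p ∈ P}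
  one_mem' := by
    intro p hp hd
    simp only [Rat.den_ofNat, Nat.dvd_one] at hd
    exact absurd hd hp.ne_one
  zero_mem' := by
    intro p hp hd
    simp only [Rat.den_ofNat, Nat.dvd_one] at hd
    exact absurd hd hp.ne_one
  mul_mem' := by
    intro a b ha hb p hp hd
    rcases (Nat.Prime.dvd_mul hp).mp (hd.trans (Rat.mul_den_dvd a b)) with h | h
    · exact ha p hp h
    · exact hb p hp h
  add_mem' := by
    intro a b ha hb p hp hd
    rcases (Nat.Prime.dvd_mul hp).mp (hd.trans (Rat.add_den_dvd a b)) with h | h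
    · exact ha p hp h
    · exact hb p hp h
  neg_mem' := by
    intro a ha p hp hd
    rw [Rat.neg_den] at hd
    exact ha p hp hd

lemma inv_den_mem_PRing (P : Set ℕ) :
    ∀ d : ℕ, d ≠ 0 → (∀ p : ℕ, p.Prime → p ∣ d → p ∈ P) → ((d : ℚ)⁻¹) ∈ PRing P := by
  intro d
  induction d using Nat.strong_induction_on with
  | _ d ih =>
    intro hd0 hdP
    rcases eq_or_ne d 1 with rfl | hd1
    · simpa using (PRing P).one_mem
    · obtain ⟨p, hp, e, rfl⟩ := Nat.exists_prime_and_dvd hd1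
      have he0 : e ≠ 0 := by rintro rfl; simp at hd0
      have hkey : ((p * e : ℕ) : ℚ)⁻¹ = (p : ℚ)⁻¹ * (e : ℚ)⁻¹ := by
        push_cast; rw [mul_inv]
      rw [hkey]
      refine mul_mem (Subring.subset_closure ⟨p, hdP p hp ⟨e, rfl⟩, rfl⟩) ?_
      exact ih e ((Nat.lt_mul_iff_one_lt_left (Nat.pos_of_ne_zero he0)).mpr hp.one_lt) he0
        (fun q hq hqe => hdP q hq (hqe.mul_left p))

lemma mem_PRing_iff (P : Set ℕ) (hP : ∀ p ∈ P, p.Prime) (q : ℚ) :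
    q ∈ PRing P ↔ ∀ p : ℕ, p.Prime → p ∣ q.den → p ∈ P := by
  constructor
  · intro h
    have hle : PRing P ≤ denRing P := by
      apply Subring.closure_le.mpr
      rintro x ⟨p, hpP, rfl⟩
      intro r hr hrd
      rw [Rat.inv_natCast_den_of_pos (hP p hpP).pos] at hrd
      rwa [(Nat.prime_dvd_prime_iff_eq hr (hP p hpP)).mp hrd]
    exact hle h
  · intro h
    have hq : q = (q.num : ℚ) * ((q.den : ℚ))⁻¹ := by
      rw [← div_eq_mul_inv, Rat.num_div_den]
    rw [hq]
    exact mul_mem (intCast_mem _ _) (inv_den_mem_PRing P q.den q.den_nz h)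

open AddSubgroup in
lemma map_mulLeft_PRing (P : Set ℕ) (k : ℕ) (hk0 : k ≠ 0)
    (hkP : ∀ p : ℕ, p.Prime → p ∣ k → p ∈ P) :
    ((PRing P).toAddSubgroup.map (AddMonoidHom.mulLeft (k : ℚ))) = (PRing P).toAddSubgroup := by
  apply le_antisymm
  · rintro _ ⟨q, hq, rfl⟩
    show (k : ℚ) * q ∈ PRing P
    exact mul_mem (natCast_mem _ k) hq
  · intro q hq
    have hq' : q ∈ PRing P := hq
    refine ⟨(k : ℚ)⁻¹ * q, ?_, ?_⟩
    · show (k : ℚ)⁻¹ * q ∈ PRing P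
      exact mul_mem (inv_den_mem_PRing P k hk0 hkP) hq'
    · have hk : (k : ℚ) ≠ 0 := Nat.cast_ne_zero.mpr hk0
      show (k : ℚ) * ((k : ℚ)⁻¹ * q) = q
      field_simp

open AddSubgroup in
lemma relindex_map_mulLeft (P : Set ℕ) (hP : ∀ p ∈ P, p.Prime) (m : ℕ) (hm0 : m ≠ 0)
    (hmP : ∀ p : ℕ, p.Prime → p ∣ m → p ∉ P) :
    (((PRing P).toAddSubgroup.map (AddMonoidHom.mulLeft (m : ℚ))).relIndex
      (PRing P).toAddSubgroup) = m := by
  set A : AddSubgroup ℚ := (PRing P).toAddSubgroup with hA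
  set H : AddSubgroup ℚ := A.map (AddMonoidHom.mulLeft (m : ℚ)) with hH
  have hmQ : (m : ℚ) ≠ 0 := Nat.cast_ne_zero.mpr hm0
  have memA : ∀ n : ℤ, ((n : ℚ)) ∈ A := fun n => intCast_mem (PRing P) n
  have memH : ∀ x : ℚ, x ∈ H ↔ ∃ a : ℚ, a ∈ PRing P ∧ (m : ℚ) * a = x := by
    intro x
    constructor
    · rintro ⟨a, ha, rfl⟩; exact ⟨a, ha, rfl⟩
    · rintro ⟨a, ha, rfl⟩; exact ⟨a, ha, rfl⟩
  let g : ℤ →+ A := AddMonoidHom.mk' (fun n => ⟨(n : ℚ), memA n⟩)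
    (by intro a b; ext; push_cast; ring)
  let f : ℤ →+ (A ⧸ H.addSubgroupOf A) := (QuotientAddGroup.mk' _).comp g
  have hfsurj : Function.Surjective f := by
    intro x
    induction x using QuotientAddGroup.induction_on with
    | H a =>
      obtain ⟨q, hq⟩ := a
      have hq' : q ∈ PRing P := hq
      have hden : ∀ p : ℕ, p.Prime → p ∣ q.den → p ∈ P := (mem_PRing_iff P hP q).mp hq'
      have hco : Nat.Coprime q.den m := by
        by_contra hco
        obtain ⟨p, hp, h1, h2⟩ := Nat.Prime.not_coprime_iff_dvd.mp hco
        exact hmP p hp h2 (hden p hp h1)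
      have hcoZ : IsCoprime (q.den : ℤ) (m : ℤ) := by
        rw [Int.isCoprime_iff_gcd_eq_one]
        exact_mod_cast hco
      obtain ⟨u, v, huv⟩ := hcoZ
      refine ⟨q.num * u, ?_⟩
      have hden0 : ((q.den : ℚ)) ≠ 0 := Nat.cast_ne_zero.mpr q.den_nz
      have hqe : (q.num : ℚ) = q * (q.den : ℚ) := (div_eq_iff hden0).mp (Rat.num_div_den q)
      have huvQ : (u : ℚ) * (q.den : ℚ) + (v : ℚ) * (m : ℚ) = 1 := by
        exact_mod_cast congrArg (Int.cast : ℤ → ℚ) huv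
      have hdiff : ((q.num * u : ℤ) : ℚ) - q =
          (m : ℚ) * ((-(q.num * v) : ℤ) * (q.den : ℚ)⁻¹) := by
        push_cast
        field_simp
        linear_combination (q.num : ℚ) * huvQ + hqe
      show QuotientAddGroup.mk (g (q.num * u)) = QuotientAddGroup.mk ⟨q, hq⟩
      rw [QuotientAddGroup.eq]
      rw [mem_addSubgroupOf]
      show (-(((q.num * u : ℤ) : ℚ)) + q) ∈ H
      rw [memH]
      refine ⟨-((-(q.num * v) : ℤ) * (q.den : ℚ)⁻¹), ?_, ?_⟩
      · exact neg_mem (mul_mem (intCast_mem _ _) (inv_den_mem_PRing P q.den q.den_nz hden))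
      · rw [mul_neg, ← hdiff]; ring
  have hker : f.ker = AddSubgroup.zmultiples (m : ℤ) := by
    ext n
    rw [Int.mem_zmultiples_iff]
    simp only [AddMonoidHom.mem_ker]
    have : f n = 0 ↔ ((n : ℚ)) ∈ H := by
      show QuotientAddGroup.mk (g n) = 0 ↔ _
      rw [QuotientAddGroup.eq_zero_iff, mem_addSubgroupOf]
      exact Iff.rfl
    rw [this, memH]
    constructor
    · rintro ⟨a, ha, hma⟩
      have haden : ∀ p : ℕ, p.Prime → p ∣ a.den → p ∈ P := (mem_PRing_iff P hP a).mp ha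
      have haq : a = (n : ℚ) / (m : ℚ) := by
        field_simp [← hma]
        linear_combination hma
      have hadvd : (a.den : ℤ) ∣ (m : ℤ) := by
        have ha2 : a = Rat.divInt n (m : ℤ) := by
          rw [Rat.divInt_eq_div, haq]; push_cast; ring
        rw [ha2]
        exact Rat.den_dvd n m
      have hadvd' : a.den ∣ m := by exact_mod_cast hadvd
      have haden1 : a.den = 1 := by
        by_contra h1
        obtain ⟨p, hp, hpd⟩ := Nat.exists_prime_and_dvd h1
        exact hmP p hp (hpd.trans hadvd') (haden p hp hpd)
      have hanum : ((a.num : ℚ)) = a := (Rat.den_eq_one_iff a).mp haden1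
      have : ((m * a.num : ℤ) : ℚ) = ((n : ℤ) : ℚ) := by push_cast [hanum]; exact hma
      exact ⟨a.num, by exact_mod_cast this.symm⟩
    · rintro ⟨t, rfl⟩
      exact ⟨(t : ℚ), intCast_mem _ t, by push_cast; ring⟩
  have hcard : Nat.card (A ⧸ H.addSubgroupOf A) = m := by
    have e1 := (QuotientAddGroup.quotientKerEquivOfSurjective f hfsurj).symm
    have e2 := QuotientAddGroup.quotientAddEquivOfEq hker
    have e3 := Int.quotientZMultiplesNatEquivZMod m
    rw [Nat.card_congr e1.toEquiv, Nat.card_congr e2.toEquiv, Nat.card_congr e3.toEquiv,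
      Nat.card_zmod]
  rw [AddSubgroup.relIndex, AddSubgroup.index, hcard]

/-- For `C = ℤ[𝒫⁻¹]` and `N ≥ 1`, the subgroup `N·C` has finite index in `C`, and the index
is the largest positive divisor of `N` having no prime divisor in `𝒫`. -/
theorem index_nsmul_PRing (P : Set ℕ) (hP : ∀ p ∈ P, p.Prime) (N : ℕ) (hN : 1 ≤ N) :
    letI A : AddSubgroup ℚ := (PRing P).toAddSubgroup
    letI NA : AddSubgroup ℚ := A.map (AddMonoidHom.mulLeft (N : ℚ))
    0 < NA.relIndex A ∧ NA.relIndex A ∣ N ∧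
      (∀ p : ℕ, p.Prime → p ∣ NA.relIndex A → p ∉ P) ∧
      (∀ k : ℕ, k ∣ N → (∀ p : ℕ, p.Prime → p ∣ k → p ∉ P) → k ≤ NA.relIndex A) := by
  classical
  have hN0 : N ≠ 0 := by omega
  set k : ℕ := ∏ p ∈ N.primeFactors.filter (fun p => p ∈ P), p ^ N.factorization p with hk
  set m : ℕ := ∏ p ∈ N.primeFactors.filter (fun p => p ∉ P), p ^ N.factorization p with hm
  have htot : ∏ p ∈ N.primeFactors, p ^ N.factorization p = N :=
    Nat.factorization_prod_pow_eq_self hN0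
  have hmk : m * k = N := by
    rw [hm, hk, mul_comm, Finset.prod_filter_mul_prod_filter_not N.primeFactors
      (fun p => p ∈ P) (fun p => p ^ N.factorization p)]
    exact htot
  have hm0 : m ≠ 0 := by
    intro h
    rw [← hmk, h, zero_mul] at hN0
    exact hN0 rfl
  have hk0 : k ≠ 0 := by
    intro h
    rw [← hmk, h, mul_zero] at hN0
    exact hN0 rfl
  have hkP : ∀ p : ℕ, p.Prime → p ∣ k → p ∈ P := by
    intro p hp hpk
    rw [hk] at hpk
    obtain ⟨q, hq, hpq⟩ := hp.prime.exists_mem_finset_dvd hpk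
    simp only [Finset.mem_filter] at hq
    have hqp : q.Prime := Nat.prime_of_mem_primeFactors hq.1
    have hpq' : p = q := (Nat.prime_dvd_prime_iff_eq hp hqp).mp (hp.dvd_of_dvd_pow hpq)
    rw [hpq']; exact hq.2
  have hmPnot : ∀ p : ℕ, p.Prime → p ∣ m → p ∉ P := by
    intro p hp hpm
    rw [hm] at hpm
    obtain ⟨q, hq, hpq⟩ := hp.prime.exists_mem_finset_dvd hpm
    simp only [Finset.mem_filter] at hq
    have hqp : q.Prime := Nat.prime_of_mem_primeFactors hq.1
    have hpq' : p = q := (Nat.prime_dvd_prime_iff_eq hp hqp).mp (hp.dvd_of_dvd_pow hpq)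
    rw [hpq']; exact hq.2
  have hNA : (PRing P).toAddSubgroup.map (AddMonoidHom.mulLeft (N : ℚ)) =
      (PRing P).toAddSubgroup.map (AddMonoidHom.mulLeft (m : ℚ)) := by
    have h1 : (AddMonoidHom.mulLeft (N : ℚ)) =
        (AddMonoidHom.mulLeft (m : ℚ)).comp (AddMonoidHom.mulLeft (k : ℚ)) := by
      ext x
      simp only [AddMonoidHom.coe_mulLeft, AddMonoidHom.coe_comp, Function.comp_apply]
      rw [← hmk]; push_cast; ring
    rw [h1, ← AddSubgroup.map_map, map_mulLeft_PRing P k hk0 hkP]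
  have hrel := relindex_map_mulLeft P hP m hm0 hmPnot
  show 0 < (((PRing P).toAddSubgroup.map (AddMonoidHom.mulLeft (N : ℚ))).relIndex
      (PRing P).toAddSubgroup) ∧ _ ∧ _ ∧ _
  rw [hNA, hrel]
  refine ⟨Nat.pos_of_ne_zero hm0, ⟨k, hmk.symm⟩, hmPnot, ?_⟩
  intro k' hk'N hk'P
  have hco : Nat.Coprime k' k := by
    by_contra hco
    obtain ⟨p, hp, h1, h2⟩ := Nat.Prime.not_coprime_iff_dvd.mp hco
    exact hk'P p hp h1 (hkP p hp h2)
  rw [← hmk] at hk'N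
  exact Nat.le_of_dvd (Nat.pos_of_ne_zero hm0) (hco.dvd_of_dvd_mul_right hk'N)
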